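/- Let n ≥ 1 and let 𝔫 be a real Lie algebra with basis {X₁,…,X₂ₙ, Y₁,…,Y₂ₙ, Z, E₁, E₂, E₃} whose only nonzero brackets among basis elements are [Xⱼ, Yⱼ] = Z for j = 1,…,2n (so 𝔫 ≅ 𝔥₂ₙ ⊕ ℝ³, the sum of a Heisenberg algebra and an abelian algebra). Define ℝ-linear maps J₂, J₃ on 𝔫 by: J₂X₂ⱼ₋₁ = Y₂ⱼ, J₂X₂ⱼ = Y₂ⱼ₋₁, J₂Y₂ⱼ = X₂ⱼ₋₁, J₂Y₂ⱼ₋₁ = X₂ⱼ, J₂Z = E₂, J₂E₂ = Z, J₂E₁ = −E₃, J₂E₃ = −E₁; and J₃X₂ⱼ₋₁ = X₂ⱼ, J₃X₂ⱼ = −X₂ⱼ₋₁, J₃Y₂ⱼ₋₁ = Y₂ⱼ, J₃Y₂ⱼ = −Y₂ⱼ₋₁, J₃Z = E₁, J₃E₁ = −Z, J₃E₂ = E₃, J₃E₃ = −E₂ (for j = 1,…,n). Then J₂² = id, J₃² = −id, J₂J₃ = −J₃J₂, and J₂ is an Abelian paracomplex structure ([J₂a, J₂b] = −[a,b] for all a,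 b ∈ 𝔫) while J₃ is an Abelian complex structure ([J₃a, J₃b] = [a,b] for all a, b ∈ 𝔫); consequently, setting J₁ := J₃J₂, the triple (J₁, J₂, J₃) is a paraquaternionic structure on 𝔫 with vanishing Nijenhuis tensors N_{J₁} = N_{J₂} = N_{J₃} = 0. -/

import Mathlib

/-- The Nijenhuis tensor of a linear endomorphism `J` of a real Lie algebra:
`N_J(x,y) = [Jx,Jy] + J²[x,y] − J[Jx,y] − J[x,Jy]`. -/
def nijenhuis {L : Type*} [LieRing L] [LieAlgebra ℝ L] (J : L →ₗ[ℝ] L) (x y : L) : L :=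
  ⁅J x, J y⁆ + J (J ⁅x, y⁆) - J ⁅J x, y⁆ - J ⁅x, J y⁆

/-- On `𝔫 = 𝔥₂ₙ ⊕ ℝ³` (Heisenberg ⊕ abelian) with basis
`Xodd j = X₂ⱼ₋₁, Xev j = X₂ⱼ, Yodd j = Y₂ⱼ₋₁, Yev j = Y₂ⱼ` (`j = 1,…,n`), `Z, E₁, E₂, E₃`,
whose only nonzero brackets among basis elements are `[Xⱼ, Yⱼ] = Z`, the endomorphisms
`J₂` (`X₂ⱼ₋₁ ↦ Y₂ⱼ, X₂ⱼ ↦ Y₂ⱼ₋₁, Y₂ⱼ ↦ X₂ⱼ₋₁, Y₂ⱼ₋₁ ↦ X₂ⱼ, Z ↦ E₂, E₂ ↦ Z, E₁ ↦ −E₃,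
E₃ ↦ −E₁`) and `J₃` (`X₂ⱼ₋₁ ↦ X₂ⱼ, X₂ⱼ ↦ −X₂ⱼ₋₁, Y₂ⱼ₋₁ ↦ Y₂ⱼ, Y₂ⱼ ↦ −Y₂ⱼ₋₁, Z ↦ E₁,
E₁ ↦ −Z, E₂ ↦ E₃, E₃ ↦ −E₂`) satisfy `J₂² = id`, `J₃² = −id`, `J₂J₃ = −J₃J₂`, `J₂` is an
Abelian paracomplex structure, `J₃` is an Abelian complex structure, and with `J₁ := J₃J₂`
the triple `(J₁, J₂, J₃)` is a paraquaternionic structure with vanishing Nijenhuis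
tensors. -/
theorem stmt_15 {N : Type*} [LieRing N] [LieAlgebra ℝ N] (n : ℕ) (hn : 1 ≤ n)
    (Xodd Xev Yodd Yev : Fin n → N) (Z E1 E2 E3 : N)
    -- basis
    (hindep : LinearIndependent ℝ
      (Sum.elim (Sum.elim Xodd Xev) (Sum.elim (Sum.elim Yodd Yev) ![Z, E1, E2, E3])))
    (hspan : Submodule.span ℝ
      (Set.range Xodd ∪ Set.range Xev ∪ Set.range Yodd ∪ Set.range Yev
        ∪ {Z, E1, E2, E3}) = ⊤)
    -- the only nonzero brackets among basis elements are [Xⱼ, Yⱼ] = Z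
    (hXY : ∀ j, ⁅Xodd j, Yodd j⁆ = Z) (hXY' : ∀ j, ⁅Xev j, Yev j⁆ = Z)
    (hXoXo : ∀ i j, ⁅Xodd i, Xodd j⁆ = 0) (hXoXe : ∀ i j, ⁅Xodd i, Xev j⁆ = 0)
    (hXeXe : ∀ i j, ⁅Xev i, Xev j⁆ = 0)
    (hXoYo : ∀ i j, i ≠ j → ⁅Xodd i, Yodd j⁆ = 0)
    (hXoYe : ∀ i j, ⁅Xodd i, Yev j⁆ = 0) (hXeYo : ∀ i j, ⁅Xev i, Yodd j⁆ = 0)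
    (hXeYe : ∀ i j, i ≠ j → ⁅Xev i, Yev j⁆ = 0)
    (hYoYo : ∀ i j, ⁅Yodd i, Yodd j⁆ = 0) (hYoYe : ∀ i j, ⁅Yodd i, Yev j⁆ = 0)
    (hYeYe : ∀ i j, ⁅Yev i, Yev j⁆ = 0)
    -- Z, E₁, E₂, E₃ are central
    (hZ : ∀ v : N, ⁅Z, v⁆ = 0) (hE1 : ∀ v : N, ⁅E1, v⁆ = 0)
    (hE2 : ∀ v : N, ⁅E2, v⁆ = 0) (hE3 : ∀ v : N, ⁅E3, v⁆ = 0)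
    -- the endomorphisms J₂ and J₃
    (J2 J3 : N →ₗ[ℝ] N)
    (hJ2Xo : ∀ j, J2 (Xodd j) = Yev j) (hJ2Xe : ∀ j, J2 (Xev j) = Yodd j)
    (hJ2Ye : ∀ j, J2 (Yev j) = Xodd j) (hJ2Yo : ∀ j, J2 (Yodd j) = Xev j)
    (hJ2Z : J2 Z = E2) (hJ2E2 : J2 E2 = Z) (hJ2E1 : J2 E1 = -E3) (hJ2E3 : J2 E3 = -E1)
    (hJ3Xo : ∀ j, J3 (Xodd j) = Xev j) (hJ3Xe : ∀ j, J3 (Xev j) = -Xodd j)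
    (hJ3Yo : ∀ j, J3 (Yodd j) = Yev j) (hJ3Ye : ∀ j, J3 (Yev j) = -Yodd j)
    (hJ3Z : J3 Z = E1) (hJ3E1 : J3 E1 = -Z) (hJ3E2 : J3 E2 = E3) (hJ3E3 : J3 E3 = -E2) :
    -- J₂² = id, J₃² = −id, J₂J₃ = −J₃J₂
    (∀ v : N, J2 (J2 v) = v)
    ∧ (∀ v : N, J3 (J3 v) = -v)
    ∧ (∀ v : N, J2 (J3 v) = -J3 (J2 v))
    -- J₂ is Abelian paracomplex, J₃ is Abelian complex
    ∧ (∀ a b : N, ⁅J2 a, J2 b⁆ = -⁅a, b⁆)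
    ∧ (∀ a b : N, ⁅J3 a, J3 b⁆ = ⁅a, b⁆)
    -- with J₁ := J₃J₂: paraquaternionic identities
    ∧ (∀ v : N, (J3 ∘ₗ J2) ((J3 ∘ₗ J2) v) = v)
    ∧ (∀ v : N, (J3 ∘ₗ J2) (J2 v) = J3 v)
    ∧ (∀ v : N, J2 ((J3 ∘ₗ J2) v) = -J3 v)
    -- vanishing Nijenhuis tensors
    ∧ (∀ x y : N, nijenhuis (J3 ∘ₗ J2) x y = 0)
    ∧ (∀ x y : N, nijenhuis J2 x y = 0)
    ∧ (∀ x y : N, nijenhuis J3 x y = 0) := by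
  -- reversed / centralized bracket lemmas
  have rev0 : ∀ x y : N, ⁅x, y⁆ = 0 → ⁅y, x⁆ = 0 := fun x y h => by
    rw [← lie_skew, h, neg_zero]
  have hZ' : ∀ v : N, ⁅v, Z⁆ = 0 := fun v => rev0 _ _ (hZ v)
  have hE1' : ∀ v : N, ⁅v, E1⁆ = 0 := fun v => rev0 _ _ (hE1 v)
  have hE2' : ∀ v : N, ⁅v, E2⁆ = 0 := fun v => rev0 _ _ (hE2 v)
  have hE3' : ∀ v : N, ⁅v, E3⁆ = 0 := fun v => rev0 _ _ (hE3 v)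
  have hXeXo : ∀ i j, ⁅Xev i, Xodd j⁆ = 0 := fun i j => rev0 _ _ (hXoXe j i)
  have hYeXo : ∀ i j, ⁅Yev i, Xodd j⁆ = 0 := fun i j => rev0 _ _ (hXoYe j i)
  have hYoXe : ∀ i j, ⁅Yodd i, Xev j⁆ = 0 := fun i j => rev0 _ _ (hXeYo j i)
  have hYeYo : ∀ i j, ⁅Yev i, Yodd j⁆ = 0 := fun i j => rev0 _ _ (hYoYe j i)
  have hXoYo' : ∀ i j, ⁅Xodd i, Yodd j⁆ = if i = j then Z else 0 := fun i j => by
    by_cases h : i = j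
    · subst h; rw [if_pos rfl, hXY]
    · rw [if_neg h, hXoYo i j h]
  have hXeYe' : ∀ i j, ⁅Xev i, Yev j⁆ = if i = j then Z else 0 := fun i j => by
    by_cases h : i = j
    · subst h; rw [if_pos rfl, hXY']
    · rw [if_neg h, hXeYe i j h]
  have hYoXo' : ∀ i j, ⁅Yodd i, Xodd j⁆ = if i = j then -Z else 0 := fun i j => by
    by_cases h : i = j
    · subst h; rw [← lie_skew, hXY, if_pos rfl]
    · rw [← lie_skew, hXoYo j i (Ne.symm h), neg_zero, if_neg h]
  have hYeXe : ∀ i j, ⁅Yev i, Xev j⁆ = if i = j then -Z else 0 := fun i j => by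
    by_cases h : i = j
    · subst h; rw [← lie_skew, hXY', if_pos rfl]
    · rw [← lie_skew, hXeYe j i (Ne.symm h), neg_zero, if_neg h]
  -- membership helper
  set S : Set N := Set.range Xodd ∪ Set.range Xev ∪ Set.range Yodd ∪ Set.range Yev
      ∪ {Z, E1, E2, E3} with hS
  -- part 1-3: linear identities via ext_on
  have h1 : ∀ v : N, J2 (J2 v) = v := by
    have : J2 ∘ₗ J2 = LinearMap.id := by
      apply LinearMap.ext_on hspan
      intro x hx
      simp only [hS, Set.mem_union, Set.mem_range, Set.mem_insert_iff,
        Set.mem_singleton_iff] at hx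
      rcases hx with ((((⟨j, rfl⟩ | ⟨j, rfl⟩) | ⟨j, rfl⟩) | ⟨j, rfl⟩) | rfl | rfl | rfl | rfl) <;>
        simp [hJ2Xo, hJ2Xe, hJ2Yo, hJ2Ye, hJ2Z, hJ2E1, hJ2E2, hJ2E3]
    exact fun v => LinearMap.congr_fun this v
  have h2 : ∀ v : N, J3 (J3 v) = -v := by
    have : J3 ∘ₗ J3 = -LinearMap.id := by
      apply LinearMap.ext_on hspan
      intro x hx
      simp only [hS, Set.mem_union, Set.mem_range, Set.mem_insert_iff,
        Set.mem_singleton_iff] at hx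
      rcases hx with ((((⟨j, rfl⟩ | ⟨j, rfl⟩) | ⟨j, rfl⟩) | ⟨j, rfl⟩) | rfl | rfl | rfl | rfl) <;>
        simp [hJ3Xo, hJ3Xe, hJ3Yo, hJ3Ye, hJ3Z, hJ3E1, hJ3E2, hJ3E3]
    exact fun v => LinearMap.congr_fun this v
  have h3 : ∀ v : N, J2 (J3 v) = -J3 (J2 v) := by
    have : J2 ∘ₗ J3 = -(J3 ∘ₗ J2) := by
      apply LinearMap.ext_on hspan
      intro x hx
      simp only [hS, Set.mem_union, Set.mem_range, Set.mem_insert_iff,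
        Set.mem_singleton_iff] at hx
      rcases hx with ((((⟨j, rfl⟩ | ⟨j, rfl⟩) | ⟨j, rfl⟩) | ⟨j, rfl⟩) | rfl | rfl | rfl | rfl) <;>
        simp [hJ2Xo, hJ2Xe, hJ2Yo, hJ2Ye, hJ2Z, hJ2E1, hJ2E2, hJ2E3,
          hJ3Xo, hJ3Xe, hJ3Yo, hJ3Ye, hJ3Z, hJ3E1, hJ3E2, hJ3E3]
    exact fun v => LinearMap.congr_fun this v
  -- bracket bilinear map
  let Br : (N →ₗ[ℝ] N) → (N →ₗ[ℝ] N) → (N →ₗ[ℝ] N →ₗ[ℝ] N) := fun f g =>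
    LinearMap.compl₂ ((LinearMap.mk₂ ℝ (fun a b : N => ⁅a, b⁆) add_lie smul_lie lie_add lie_smul) ∘ₗ f) g
  have hBr : ∀ f g a b, Br f g a b = ⁅f a, g b⁆ := fun f g a b => rfl
  have h4 : ∀ a b : N, ⁅J2 a, J2 b⁆ = -⁅a, b⁆ := by
    have : Br J2 J2 = Br (-LinearMap.id) LinearMap.id := by
      apply LinearMap.ext_on hspan
      intro x hx
      apply LinearMap.ext_on hspan
      intro y hy
      simp only [hS, Set.mem_union, Set.mem_range, Set.mem_insert_iff,
        Set.mem_singleton_iff] at hx hy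
      rcases hx with ((((⟨i, rfl⟩ | ⟨i, rfl⟩) | ⟨i, rfl⟩) | ⟨i, rfl⟩) | rfl | rfl | rfl | rfl) <;>
        rcases hy with
          ((((⟨j, rfl⟩ | ⟨j, rfl⟩) | ⟨j, rfl⟩) | ⟨j, rfl⟩) | rfl | rfl | rfl | rfl) <;>
        simp [hBr, hJ2Xo, hJ2Xe, hJ2Yo, hJ2Ye, hJ2Z, hJ2E1, hJ2E2, hJ2E3,
          hXoYo', hXeYe', hYoXo', hYeXe, hXoXo, hXoXe, hXeXo, hXeXe, hXoYe, hXeYo,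
          hYoYo, hYoYe, hYeYe, hYeXo, hYoXe, hYeYo, hZ, hE1, hE2, hE3, hZ', hE1', hE2', hE3',
          apply_ite Neg.neg] <;>
        (try (split <;> simp))
    intro a b
    have := LinearMap.congr_fun (LinearMap.congr_fun this a) b
    simpa [hBr] using this
  have h5 : ∀ a b : N, ⁅J3 a, J3 b⁆ = ⁅a, b⁆ := by
    have : Br J3 J3 = Br LinearMap.id LinearMap.id := by
      apply LinearMap.ext_on hspan
      intro x hx
      apply LinearMap.ext_on hspan
      intro y hy
      simp only [hS, Set.mem_union, Set.mem_range, Set.mem_insert_iff,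
        Set.mem_singleton_iff] at hx hy
      rcases hx with ((((⟨i, rfl⟩ | ⟨i, rfl⟩) | ⟨i, rfl⟩) | ⟨i, rfl⟩) | rfl | rfl | rfl | rfl) <;>
        rcases hy with
          ((((⟨j, rfl⟩ | ⟨j, rfl⟩) | ⟨j, rfl⟩) | ⟨j, rfl⟩) | rfl | rfl | rfl | rfl) <;>
        simp [hBr, hJ3Xo, hJ3Xe, hJ3Yo, hJ3Ye, hJ3Z, hJ3E1, hJ3E2, hJ3E3,
          hXoYo', hXeYe', hYoXo', hYeXe, hXoXo, hXoXe, hXeXo, hXeXe, hXoYe, hXeYo,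
          hYoYo, hYoYe, hYeYe, hYeXo, hYoXe, hYeYo, hZ, hE1, hE2, hE3, hZ', hE1', hE2', hE3',
          apply_ite Neg.neg] <;>
        (try (split <;> simp))
    intro a b
    have := LinearMap.congr_fun (LinearMap.congr_fun this a) b
    simpa [hBr] using this
  -- consequences
  have h6 : ∀ v : N, (J3 ∘ₗ J2) ((J3 ∘ₗ J2) v) = v := fun v => by
    simp only [LinearMap.comp_apply]
    rw [h3 (J2 v), h1 v, map_neg, h2 v, neg_neg]
  have h7 : ∀ v : N, (J3 ∘ₗ J2) (J2 v) = J3 v := fun v => by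
    simp only [LinearMap.comp_apply, h1]
  have h8 : ∀ v : N, J2 ((J3 ∘ₗ J2) v) = -J3 v := fun v => by
    simp only [LinearMap.comp_apply]
    rw [h3, h1]
  have h1J1 : ∀ a b : N, ⁅(J3 ∘ₗ J2) a, (J3 ∘ₗ J2) b⁆ = -⁅a, b⁆ := fun a b => by
    simp only [LinearMap.comp_apply, h5, h4]
  have n1 : ∀ x y : N, nijenhuis (J3 ∘ₗ J2) x y = 0 := fun x y => by
    have key : ⁅(J3 ∘ₗ J2) x, y⁆ = -⁅x, (J3 ∘ₗ J2) y⁆ := by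
      have h := h1J1 x ((J3 ∘ₗ J2) y)
      rwa [h6 y] at h
    have h6' : (J3 ∘ₗ J2) ((J3 ∘ₗ J2) ⁅x, y⁆) = ⁅x, y⁆ := h6 _
    rw [nijenhuis, h1J1, key, h6']
    simp only [map_neg]
    abel
  have n2 : ∀ x y : N, nijenhuis J2 x y = 0 := fun x y => by
    have key : ⁅J2 x, y⁆ = -⁅x, J2 y⁆ := by
      have h := h4 x (J2 y)
      rwa [h1 y] at h
    rw [nijenhuis, h4, key, h1]
    simp only [map_neg]
    abel
  have n3 : ∀ x y : N, nijenhuis J3 x y = 0 := fun x y => by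
    have key : ⁅J3 x, y⁆ = -⁅x, J3 y⁆ := by
      have h := h5 x (J3 y)
      rw [h2 y, lie_neg] at h
      rw [← h, neg_neg]
    rw [nijenhuis, h5, key, h2]
    simp only [map_neg]
    abel
  exact ⟨h1, h2, h3, h4, h5, h6, h7, h8, n1, n2, n3⟩
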